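/- Let X = ℕ, let a ≥ 2, and let α(x,y) = a·x + a·y. Let ≈ be the smallest equivalence relation on nonempty finite sequences over ℕ generated by permutations of entries and by replacing consecutive entries x, y with the single entry α(x,y). Then for any x, y ∈ ℕ with x, y < a, if the singleton sequences (x) and (y) are ≈-equivalent, then x = y. In particular, the natural map ι : ℕ → Z/≈ is injective on {0, 1, ..., a−1}. -/
import Mathlib


/-- One rewriting step on finite sequences: either a permutation of entries, or
the replacement of two consecutive entries `x, y` by the single entry `α x y`. -/
def TensorStep {X : Type*} (α : X → X → X) (l l' : List X) : Prop :=
  l.Perm l' ∨ ∃ (p s : List X) (x y : X),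
    l = p ++ x :: y :: s ∧ l' = p ++ α x y :: s

/-- Invariant: sum modulo `a-1`, refined to distinguish the zero sum. -/
def stmt18Inv (a : ℕ) (l : List ℕ) : ℕ :=
  if l.sum = 0 then 0 else (l.sum - 1) % (a - 1) + 1

lemma stmt18Inv_step (a : ℕ) (ha : 2 ≤ a) (l l' : List ℕ)
    (h : TensorStep (fun u v : ℕ => a * u + a * v) l l') :
    stmt18Inv a l = stmt18Inv a l' := by
  rcases h with hp | ⟨p, s, x, y, rfl, rfl⟩
  · unfold stmt18Inv
    rw [hp.sum_eq]
  · have hsum : (p ++ (a * x + a * y) :: s).sum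
        = (p ++ x :: y :: s).sum + (a - 1) * (x + y) := by
      have h1 : (a - 1) * (x + y) = a * (x + y) - (x + y) := Nat.sub_one_mul _ _
      have h2 : a * (x + y) = a * x + a * y := by ring
      have h3 : x + y ≤ a * (x + y) := Nat.le_mul_of_pos_left _ (by omega)
      simp [List.sum_append]
      omega
    unfold stmt18Inv
    rw [hsum]
    rcases Nat.eq_zero_or_pos ((p ++ x :: y :: s).sum) with h0 | h0
    · have hx : x = 0 := by
        have := h0; simp [List.sum_append] at this; omega
      have hy : y = 0 := by
        have := h0; simp [List.sum_append] at this; omega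
      simp [h0, hx, hy]
    · have hxy : x + y ≤ (p ++ x :: y :: s).sum := by
        simp [List.sum_append]; omega
      have h0' : (p ++ x :: y :: s).sum + (a - 1) * (x + y) ≠ 0 := by omega
      rw [if_neg (by omega), if_neg h0']
      have : (p ++ x :: y :: s).sum + (a - 1) * (x + y) - 1
          = ((p ++ x :: y :: s).sum - 1) + (a - 1) * (x + y) := by omega
      rw [this, Nat.add_mul_mod_self_left]

lemma stmt18Inv_eqvGen (a : ℕ) (ha : 2 ≤ a) (l l' : List ℕ)
    (h : Relation.EqvGen (TensorStep (fun u v : ℕ => a * u + a * v)) l l') :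
    stmt18Inv a l = stmt18Inv a l' := by
  induction h with
  | rel _ _ h => exact stmt18Inv_step a ha _ _ h
  | refl => rfl
  | symm _ _ _ ih => exact ih.symm
  | trans _ _ _ _ _ ih1 ih2 => exact ih1.trans ih2

lemma stmt18Inv_singleton (a : ℕ) (ha : 2 ≤ a) (x : ℕ) (hx : x < a) :
    stmt18Inv a [x] = x := by
  unfold stmt18Inv
  rcases Nat.eq_zero_or_pos x with rfl | hpos
  · simp
  · rw [if_neg (by simp; omega)]
    simp only [List.sum_cons, List.sum_nil, Nat.add_zero]
    rw [Nat.mod_eq_of_lt (by omega)]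
    omega

/-- for `α(x,y) = a·x + a·y` on `ℕ` with `a ≥ 2`, if `x, y < a`
and the singleton sequences `(x)` and `(y)` are equivalent under the generated
equivalence, then `x = y`; i.e. `ι` is injective on `{0, 1, ..., a-1}`. -/
theorem stmt_18 (a : ℕ) (ha : 2 ≤ a) :
    ∀ x y : ℕ, x < a → y < a →
      Relation.EqvGen (TensorStep (fun u v : ℕ => a * u + a * v)) [x] [y] →
      x = y := by
  intro x y hx hy h
  have := stmt18Inv_eqvGen a ha _ _ h
  rwa [stmt18Inv_singleton a ha x hx, stmt18Inv_singleton a ha y hy] at this
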